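/- Let 0 < h < 2π/3 and let T_i be the trigonometric cubic B-spline on the uniform knots x_j = x_0 + j·h. Then T_i is twice differentiable at its central knot x_i, and T_i″(x_i) = −3·(cos(h/2)/sin(h/2))² / (2 + 4·cos(h)). -/

import Mathlib

open Real

/-- The uniform knots `x_j = x₀ + j·h`. -/
noncomputable def knot (h x₀ : ℝ) (j : ℤ) : ℝ := x₀ + (j : ℝ) * h

/-- The trigonometric cubic B-spline `T_i` on the uniform knots `x_j = x₀ + j·h`,
defined piecewise via `w_c(x) = sin((x-c)/2)`, `y_c(x) = sin((c-x)/2)` and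
`γ = sin(h/2)·sin(h)·sin(3h/2)`. -/
noncomputable def trigBSpline (h x₀ : ℝ) (i : ℤ) (x : ℝ) : ℝ :=
  let X : ℤ → ℝ := knot h x₀
  let w : ℝ → ℝ := fun c => Real.sin ((x - c) / 2)
  let y : ℝ → ℝ := fun c => Real.sin ((c - x) / 2)
  let γ : ℝ := Real.sin (h / 2) * Real.sin h * Real.sin (3 * h / 2)
  if x ∈ Set.Icc (X (i - 2)) (X (i - 1)) then
    (1 / γ) * (w (X (i - 2))) ^ 3
  else if x ∈ Set.Icc (X (i - 1)) (X i) then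
    (1 / γ) * (w (X (i - 2)) * (w (X (i - 2)) * y (X i) + y (X (i + 1)) * w (X (i - 1)))
      + y (X (i + 2)) * (w (X (i - 1))) ^ 2)
  else if x ∈ Set.Icc (X i) (X (i + 1)) then
    (1 / γ) * (w (X (i - 2)) * (y (X (i + 1))) ^ 2
      + y (X (i + 2)) * (w (X (i - 1)) * y (X (i + 1)) + y (X (i + 2)) * w (X i)))
  else if x ∈ Set.Icc (X (i + 1)) (X (i + 2)) then
    (1 / γ) * (y (X (i + 2))) ^ 3
  else 0

/- ### Auxiliary machinery -/

noncomputable def tw (c x : ℝ) : ℝ := Real.sin ((x - c) / 2)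
noncomputable def tW (c x : ℝ) : ℝ := Real.cos ((x - c) / 2)
noncomputable def ty (c x : ℝ) : ℝ := Real.sin ((c - x) / 2)
noncomputable def tY (c x : ℝ) : ℝ := Real.cos ((c - x) / 2)

lemma tw_hasDerivAt (c x : ℝ) : HasDerivAt (tw c) (tW c x / 2) x := by
  have h1 : HasDerivAt (fun y : ℝ => (y - c) / 2) ((1:ℝ)/2) x := by
    simpa using ((hasDerivAt_id x).sub_const c).div_const 2
  have := (Real.hasDerivAt_sin ((x - c)/2)).comp x h1
  unfold tw tW
  refine this.congr_deriv ?_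
  ring

lemma tW_hasDerivAt (c x : ℝ) : HasDerivAt (tW c) (-(tw c x / 2)) x := by
  have h1 : HasDerivAt (fun y : ℝ => (y - c) / 2) ((1:ℝ)/2) x := by
    simpa using ((hasDerivAt_id x).sub_const c).div_const 2
  have := (Real.hasDerivAt_cos ((x - c)/2)).comp x h1
  unfold tw tW
  refine this.congr_deriv ?_
  ring

lemma ty_hasDerivAt (c x : ℝ) : HasDerivAt (ty c) (-(tY c x / 2)) x := by
  have h1 : HasDerivAt (fun y : ℝ => (c - y) / 2) (-(1:ℝ)/2) x := by
    simpa using ((hasDerivAt_id x).const_sub c).div_const 2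
  have := (Real.hasDerivAt_sin ((c - x)/2)).comp x h1
  unfold ty tY
  refine this.congr_deriv ?_
  ring

lemma tY_hasDerivAt (c x : ℝ) : HasDerivAt (tY c) (ty c x / 2) x := by
  have h1 : HasDerivAt (fun y : ℝ => (c - y) / 2) (-(1:ℝ)/2) x := by
    simpa using ((hasDerivAt_id x).const_sub c).div_const 2
  have := (Real.hasDerivAt_cos ((c - x)/2)).comp x h1
  unfold ty tY
  refine this.congr_deriv ?_
  ring

noncomputable def Lf (g a b c d e x : ℝ) : ℝ :=
  (1 / g) * (tw a x * (tw a x * ty c x + ty d x * tw b x) + ty e x * (tw b x) ^ 2)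

noncomputable def Rf (g a b c d e x : ℝ) : ℝ :=
  (1 / g) * (tw a x * (ty d x) ^ 2 + ty e x * (tw b x * ty d x + ty e x * tw c x))

noncomputable def L1f (g a b c d e x : ℝ) : ℝ :=
  (1 / g) * (tW a x * tw a x * ty c x + (1/2) * (tW a x * tw b x * ty d x)
    + (1/2) * (tW b x * tw a x * ty d x) + tW b x * tw b x * ty e x
    - (1/2) * (tY c x * tw a x * tw a x) - (1/2) * (tY d x * tw a x * tw b x)
    - (1/2) * (tY e x * tw b x * tw b x))

noncomputable def R1f (g a b c d e x : ℝ) : ℝ :=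
  (1 / g) * ((1/2) * (tW a x * ty d x * ty d x) + (1/2) * (tW b x * ty d x * ty e x)
    + (1/2) * (tW c x * ty e x * ty e x) - tY d x * tw a x * ty d x
    - (1/2) * (tY d x * tw b x * ty e x) - (1/2) * (tY e x * tw b x * ty d x)
    - tY e x * tw c x * ty e x)

noncomputable def L2f (g a b c d e x : ℝ) : ℝ :=
  (1 / g) * ((1/2) * (tW a x * tW a x * ty c x) + (1/2) * (tW a x * tW b x * ty d x)
    - tW a x * tY c x * tw a x - (1/2) * (tW a x * tY d x * tw b x)
    + (1/2) * (tW b x * tW b x * ty e x) - (1/2) * (tW b x * tY d x * tw a x)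
    - tW b x * tY e x * tw b x - (3/4) * (tw a x * tw a x * ty c x)
    - (3/4) * (tw a x * tw b x * ty d x) - (3/4) * (tw b x * tw b x * ty e x))

noncomputable def R2f (g a b c d e x : ℝ) : ℝ :=
  (1 / g) * (-(tW a x * tY d x * ty d x) - (1/2) * (tW b x * tY d x * ty e x)
    - (1/2) * (tW b x * tY e x * ty d x) - tW c x * tY e x * ty e x
    + (1/2) * (tY d x * tY d x * tw a x) + (1/2) * (tY d x * tY e x * tw b x)
    + (1/2) * (tY e x * tY e x * tw c x) - (3/4) * (tw a x * ty d x * ty d x)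
    - (3/4) * (tw b x * ty d x * ty e x) - (3/4) * (tw c x * ty e x * ty e x))

lemma Lf_hasDerivAt (g a b c d e x : ℝ) :
    HasDerivAt (fun x => Lf g a b c d e x) (L1f g a b c d e x) x := by
  have H := ((((tw_hasDerivAt a x).mul
      (((tw_hasDerivAt a x).mul (ty_hasDerivAt c x)).add
        ((ty_hasDerivAt d x).mul (tw_hasDerivAt b x)))).add
      ((ty_hasDerivAt e x).mul ((tw_hasDerivAt b x).pow 2))).const_mul ((1:ℝ)/g))
  refine H.congr_deriv ?_
  simp only [L1f, Pi.mul_apply, Pi.add_apply, Pi.pow_apply]; ring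

lemma Rf_hasDerivAt (g a b c d e x : ℝ) :
    HasDerivAt (fun x => Rf g a b c d e x) (R1f g a b c d e x) x := by
  have H := ((((tw_hasDerivAt a x).mul ((ty_hasDerivAt d x).pow 2)).add
      ((ty_hasDerivAt e x).mul
        (((tw_hasDerivAt b x).mul (ty_hasDerivAt d x)).add
          ((ty_hasDerivAt e x).mul (tw_hasDerivAt c x))))).const_mul ((1:ℝ)/g))
  refine H.congr_deriv ?_
  simp only [R1f, Pi.mul_apply, Pi.add_apply, Pi.pow_apply]; ring

lemma L1f_hasDerivAt (g a b c d e x : ℝ) :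
    HasDerivAt (fun x => L1f g a b c d e x) (L2f g a b c d e x) x := by
  have t1 := ((tW_hasDerivAt a x).mul (tw_hasDerivAt a x)).mul (ty_hasDerivAt c x)
  have t2 := HasDerivAt.const_mul ((1:ℝ)/2)
    (((tW_hasDerivAt a x).mul (tw_hasDerivAt b x)).mul (ty_hasDerivAt d x))
  have t3 := HasDerivAt.const_mul ((1:ℝ)/2)
    (((tW_hasDerivAt b x).mul (tw_hasDerivAt a x)).mul (ty_hasDerivAt d x))
  have t4 := ((tW_hasDerivAt b x).mul (tw_hasDerivAt b x)).mul (ty_hasDerivAt e x)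
  have t5 := HasDerivAt.const_mul ((1:ℝ)/2)
    (((tY_hasDerivAt c x).mul (tw_hasDerivAt a x)).mul (tw_hasDerivAt a x))
  have t6 := HasDerivAt.const_mul ((1:ℝ)/2)
    (((tY_hasDerivAt d x).mul (tw_hasDerivAt a x)).mul (tw_hasDerivAt b x))
  have t7 := HasDerivAt.const_mul ((1:ℝ)/2)
    (((tY_hasDerivAt e x).mul (tw_hasDerivAt b x)).mul (tw_hasDerivAt b x))
  have H := HasDerivAt.const_mul ((1:ℝ)/g)
    (((((((t1.add t2).add t3).add t4).sub t5).sub t6).sub t7))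
  refine H.congr_deriv ?_
  simp only [L2f, Pi.mul_apply, Pi.add_apply, Pi.pow_apply]; ring

lemma R1f_hasDerivAt (g a b c d e x : ℝ) :
    HasDerivAt (fun x => R1f g a b c d e x) (R2f g a b c d e x) x := by
  have t1 := HasDerivAt.const_mul ((1:ℝ)/2)
    (((tW_hasDerivAt a x).mul (ty_hasDerivAt d x)).mul (ty_hasDerivAt d x))
  have t2 := HasDerivAt.const_mul ((1:ℝ)/2)
    (((tW_hasDerivAt b x).mul (ty_hasDerivAt d x)).mul (ty_hasDerivAt e x))
  have t3 := HasDerivAt.const_mul ((1:ℝ)/2)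
    (((tW_hasDerivAt c x).mul (ty_hasDerivAt e x)).mul (ty_hasDerivAt e x))
  have t4 := ((tY_hasDerivAt d x).mul (tw_hasDerivAt a x)).mul (ty_hasDerivAt d x)
  have t5 := HasDerivAt.const_mul ((1:ℝ)/2)
    (((tY_hasDerivAt d x).mul (tw_hasDerivAt b x)).mul (ty_hasDerivAt e x))
  have t6 := HasDerivAt.const_mul ((1:ℝ)/2)
    (((tY_hasDerivAt e x).mul (tw_hasDerivAt b x)).mul (ty_hasDerivAt d x))
  have t7 := ((tY_hasDerivAt e x).mul (tw_hasDerivAt c x)).mul (ty_hasDerivAt e x)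
  have H := HasDerivAt.const_mul ((1:ℝ)/g)
    (((((((t1.add t2).add t3).sub t4).sub t5).sub t6).sub t7))
  refine H.congr_deriv ?_
  simp only [R2f, Pi.mul_apply, Pi.add_apply, Pi.pow_apply]; ring

lemma glue_hasDerivAt {Lg Rg : ℝ → ℝ} {p dd : ℝ} (hL : HasDerivAt Lg dd p)
    (hR : HasDerivAt Rg dd p) (heq : Lg p = Rg p) :
    HasDerivAt (fun x => if x ≤ p then Lg x else Rg x) dd p := by
  have h1 : HasDerivWithinAt (fun x => if x ≤ p then Lg x else Rg x) dd (Set.Iic p) p :=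
    hL.hasDerivWithinAt.congr (fun x hx => if_pos hx) (if_pos le_rfl)
  have h2 : HasDerivWithinAt (fun x => if x ≤ p then Lg x else Rg x) dd (Set.Ici p) p := by
    refine hR.hasDerivWithinAt.congr (fun x hx => ?_) ?_
    · rcases eq_or_lt_of_le (Set.mem_Ici.mp hx) with hxe | hxe
      · rw [← hxe, if_pos le_rfl, heq]
      · rw [if_neg (not_le.mpr hxe)]
    · rw [if_pos le_rfl, heq]
  have h3 := h1.union h2
  rw [Set.Iic_union_Ici] at h3
  exact h3.hasDerivAt Filter.univ_mem

lemma glue_deriv {Lg Rg L1 R1 : ℝ → ℝ} {p : ℝ}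
    (hL : ∀ x, HasDerivAt Lg (L1 x) x) (hR : ∀ x, HasDerivAt Rg (R1 x) x)
    (heq : Lg p = Rg p) (heq1 : L1 p = R1 p) :
    deriv (fun x => if x ≤ p then Lg x else Rg x)
      = fun x => if x ≤ p then L1 x else R1 x := by
  funext x
  rcases lt_trichotomy x p with hx | hx | hx
  · have hev : (fun x => if x ≤ p then Lg x else Rg x) =ᶠ[nhds x] Lg := by
      filter_upwards [Iio_mem_nhds hx] with z hz
      exact if_pos (le_of_lt hz)
    rw [hev.deriv_eq, (hL x).deriv, if_pos hx.le]
  · subst hx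
    have hg : HasDerivAt (fun y => if y ≤ x then Lg y else Rg y) (L1 x) x :=
      glue_hasDerivAt (hL x) (heq1 ▸ hR x) heq
    rw [hg.deriv, if_pos le_rfl]
  · have hev : (fun x => if x ≤ p then Lg x else Rg x) =ᶠ[nhds x] Rg := by
      filter_upwards [Ioi_mem_nhds hx] with z hz
      exact if_neg (not_le.mpr hz)
    rw [hev.deriv_eq, (hR x).deriv, if_neg (not_le.mpr hx)]

/-- For `0 < h < 2π/3`, the trigonometric cubic B-spline `T_i` is twice
differentiable at its central knot `x_i`, and
`T_i″(x_i) = −3·(cos(h/2)/sin(h/2))² / (2 + 4·cos(h))`. -/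
theorem trigBSpline_secondDeriv_center (h x₀ : ℝ) (h0 : 0 < h) (h1 : h < 2 * Real.pi / 3)
    (i : ℤ) :
    HasDerivAt (deriv (trigBSpline h x₀ i))
      (-(3 * (Real.cos (h / 2) / Real.sin (h / 2)) ^ 2 / (2 + 4 * Real.cos h)))
      (knot h x₀ i) := by
  have hπ := Real.pi_pos
  set γ : ℝ := Real.sin (h / 2) * Real.sin h * Real.sin (3 * h / 2) with hγ
  set P : ℝ := knot h x₀ i with hP
  set A : ℝ := knot h x₀ (i - 2) with hA
  set B : ℝ := knot h x₀ (i - 1) with hB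
  set D : ℝ := knot h x₀ (i + 1) with hD
  set E : ℝ := knot h x₀ (i + 2) with hE
  have eA : A = P - 2 * h := by rw [hA, hP]; simp only [knot]; push_cast; ring
  have eB : B = P - h := by rw [hB, hP]; simp only [knot]; push_cast; ring
  have eD : D = P + h := by rw [hD, hP]; simp only [knot]; push_cast; ring
  have eE : E = P + 2 * h := by rw [hE, hP]; simp only [knot]; push_cast; ring
  -- values of the atoms at the central knot
  have vwa : tw A P = Real.sin h := by rw [eA]; unfold tw; congr 1; ring
  have vWa : tW A P = Real.cos h := by rw [eA]; unfold tW; congr 1; ring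
  have vwb : tw B P = Real.sin (h / 2) := by rw [eB]; unfold tw; congr 1; ring
  have vWb : tW B P = Real.cos (h / 2) := by rw [eB]; unfold tW; congr 1; ring
  have vwc : tw P P = 0 := by unfold tw; simp
  have vWc : tW P P = 1 := by unfold tW; simp
  have vyc : ty P P = 0 := by unfold ty; simp
  have vYc : tY P P = 1 := by unfold tY; simp
  have vyd : ty D P = Real.sin (h / 2) := by rw [eD]; unfold ty; congr 1; ring
  have vYd : tY D P = Real.cos (h / 2) := by rw [eD]; unfold tY; congr 1; ring
  have vye : ty E P = Real.sin h := by rw [eE]; unfold ty; congr 1; ring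
  have vYe : tY E P = Real.cos h := by rw [eE]; unfold tY; congr 1; ring
  -- trig identities
  have hsinh : Real.sin h = 2 * Real.sin (h / 2) * Real.cos (h / 2) := by
    rw [← Real.sin_two_mul]; congr 1; ring
  have hcosh : Real.cos h = 2 * Real.cos (h / 2) ^ 2 - 1 := by
    rw [← Real.cos_two_mul]; congr 1; ring
  have hsin3 : Real.sin (3 * h / 2) = 3 * Real.sin (h / 2) - 4 * Real.sin (h / 2) ^ 3 := by
    rw [show 3 * h / 2 = 3 * (h / 2) by ring, Real.sin_three_mul]
  -- positivity facts
  have hS : 0 < Real.sin (h / 2) :=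
    Real.sin_pos_of_pos_of_lt_pi (by linarith) (by linarith)
  have hC : 0 < Real.cos (h / 2) :=
    Real.cos_pos_of_mem_Ioo ⟨by linarith, by linarith⟩
  have hS3 : 0 < 3 * Real.sin (h / 2) - 4 * Real.sin (h / 2) ^ 3 := by
    have := Real.sin_pos_of_pos_of_lt_pi (show (0:ℝ) < 3 * h / 2 by linarith)
      (show 3 * h / 2 < Real.pi by linarith)
    rwa [hsin3] at this
  have hcos23 : Real.cos (2 * Real.pi / 3) = -(1/2) := by
    rw [show 2 * Real.pi / 3 = Real.pi - Real.pi / 3 by ring, Real.cos_pi_sub,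
      Real.cos_pi_div_three]
  have hch : -(1/2) < Real.cos h := by
    have := Real.cos_lt_cos_of_nonneg_of_le_pi (le_of_lt h0) (by linarith) h1
    rw [hcos23] at this; linarith
  have hden : (0:ℝ) < 2 + 4 * (2 * Real.cos (h / 2) ^ 2 - 1) := by
    rw [← hcosh]; linarith
  have hpyth := Real.sin_sq_add_cos_sq (h / 2)
  -- matching values at the knot
  have eq0 : Lf γ A B P D E P = Rf γ A B P D E P := by
    simp only [Lf, Rf]
    rw [vwa, vwb, vwc, vyc, vyd, vye]
    ring
  have eq1 : L1f γ A B P D E P = R1f γ A B P D E P := by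
    simp only [L1f, R1f]
    rw [vwa, vWa, vwb, vWb, vwc, vWc, vyc, vYc, vyd, vYd, vye, vYe, hsinh]
    ring
  have eL2 : L2f γ A B P D E P
      = -(3 * (Real.cos (h / 2) / Real.sin (h / 2)) ^ 2 / (2 + 4 * Real.cos h)) := by
    simp only [L2f]
    rw [vwa, vWa, vwb, vWb, vyc, vYc, vyd, vYd, vye, vYe, hγ, hsinh, hcosh, hsin3]
    have h3' : 3 - 4 * Real.sin (h/2)^2 ≠ 0 := by
      intro hc
      have e3 : 3 * Real.sin (h / 2) - 4 * Real.sin (h / 2) ^ 3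
          = Real.sin (h / 2) * (3 - 4 * Real.sin (h/2)^2) := by ring
      rw [e3, hc, mul_zero] at hS3
      exact lt_irrefl _ hS3
    field_simp
    rw [div_eq_iff (by rw [mul_comm]; exact h3')]
    linear_combination ((48:ℝ) * Real.sin (h/2) * Real.cos (h/2)
      - 384 * Real.sin (h/2) * Real.cos (h/2) ^ 3) * hpyth
  have eR2 : R2f γ A B P D E P
      = -(3 * (Real.cos (h / 2) / Real.sin (h / 2)) ^ 2 / (2 + 4 * Real.cos h)) := by
    simp only [R2f]
    rw [vwa, vWa, vwb, vWb, vwc, vWc, vyd, vYd, vye, vYe, hγ, hsinh, hcosh, hsin3]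
    have h3' : 3 - 4 * Real.sin (h/2)^2 ≠ 0 := by
      intro hc
      have e3 : 3 * Real.sin (h / 2) - 4 * Real.sin (h / 2) ^ 3
          = Real.sin (h / 2) * (3 - 4 * Real.sin (h/2)^2) := by ring
      rw [e3, hc, mul_zero] at hS3
      exact lt_irrefl _ hS3
    field_simp
    rw [div_eq_iff (by rw [mul_comm]; exact h3')]
    linear_combination ((48:ℝ) * Real.sin (h/2) * Real.cos (h/2)
      - 384 * Real.sin (h/2) * Real.cos (h/2) ^ 3) * hpyth
  -- the spline agrees with the glued smooth pieces near the knot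
  have hmem : Set.Ioo (P - h) (P + h) ∈ nhds P := Ioo_mem_nhds (by linarith) (by linarith)
  have hTF : trigBSpline h x₀ i =ᶠ[nhds P]
      fun x => if x ≤ P then Lf γ A B P D E x else Rf γ A B P D E x := by
    filter_upwards [hmem] with z hz
    obtain ⟨hz1, hz2⟩ := hz
    have hc1 : z ∉ Set.Icc (knot h x₀ (i - 2)) (knot h x₀ (i - 1)) := by
      rw [Set.mem_Icc]
      rintro ⟨-, hle⟩
      rw [← hB, eB] at hle
      linarith
    by_cases hzp : z ≤ P
    · have hc2 : z ∈ Set.Icc (knot h x₀ (i - 1)) (knot h x₀ i) := by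
        rw [Set.mem_Icc, ← hB, ← hP, eB]
        exact ⟨by linarith, hzp⟩
      simp only [trigBSpline]
      rw [if_neg hc1, if_pos hc2, if_pos hzp]
      simp only [Lf, tw, ty, ← hγ, ← hA, ← hB, ← hP, ← hD, ← hE]
    · have hc2 : z ∉ Set.Icc (knot h x₀ (i - 1)) (knot h x₀ i) := by
        rw [Set.mem_Icc, ← hP]
        rintro ⟨-, hle⟩
        exact hzp hle
      have hc3 : z ∈ Set.Icc (knot h x₀ i) (knot h x₀ (i + 1)) := by
        rw [Set.mem_Icc, ← hP, ← hD, eD]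
        exact ⟨by linarith [le_of_not_ge hzp], by linarith⟩
      simp only [trigBSpline]
      rw [if_neg hc1, if_neg hc2, if_pos hc3, if_neg hzp]
      simp only [Rf, tw, ty, ← hγ, ← hA, ← hB, ← hP, ← hD, ← hE]
  have hderiv : deriv (fun x => if x ≤ P then Lf γ A B P D E x else Rf γ A B P D E x)
      = fun x => if x ≤ P then L1f γ A B P D E x else R1f γ A B P D E x :=
    glue_deriv (fun x => Lf_hasDerivAt γ A B P D E x) (fun x => Rf_hasDerivAt γ A B P D E x)
      eq0 eq1
  have hG : HasDerivAt (fun x => if x ≤ P then L1f γ A B P D E x else R1f γ A B P D E x)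
      (-(3 * (Real.cos (h / 2) / Real.sin (h / 2)) ^ 2 / (2 + 4 * Real.cos h))) P :=
    glue_hasDerivAt (eL2 ▸ L1f_hasDerivAt γ A B P D E P)
      (eR2 ▸ R1f_hasDerivAt γ A B P D E P) eq1
  refine HasDerivAt.congr_of_eventuallyEq ?_ hTF.deriv
  rw [hderiv]
  exact hG
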